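/- Let a, b, c, d, p, q, r, s be integers satisfying a·p + b·q = 1 + a·b and c·r + d·s = 1 + c·d, and set u = a·c + b·d. Then (a·(c − s) + b·r)·(c·q + d·(b − p)) = 1 + u·(q·(c − s) + r·(b − p)); in particular the product (a·(c − s) + b·r)·(c·q + d·(b − p)) ≡ 1 (mod u). -/
import Mathlib

theorem product_identity_x2_y2
    (a b c d p q r s : ℤ)
    (hab : a * p + b * q = 1 + a * b)
    (hcd : c * r + d * s = 1 + c * d) :
    (a * (c - s) + b * r) * (c * q + d * (b - p)) =
      1 + (a * c + b * d) * (q * (c - s) + r * (b - p)) ∧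
    (a * (c - s) + b * r) * (c * q + d * (b - p)) ≡ 1 [ZMOD a * c + b * d] := by
  have key : (a * (c - s) + b * r) * (c * q + d * (b - p)) =
      1 + (a * c + b * d) * (q * (c - s) + r * (b - p)) := by
    linear_combination hab + hcd + (a * p + b * q - 1 - a * b) * hcd
  refine ⟨key, ?_⟩
  rw [key]
  exact Int.ModEq.symm (Int.modEq_iff_dvd.mpr ⟨q * (c - s) + r * (b - p), by ring⟩)
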